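/- Sturm oscillation base case: the n-th eigenfunction of -f'' + Vf = λf on [0,L] with Dirichlet boundary conditions f(0) = f(L) = 0 has exactly n-1 zeros in the open interval (0,L), where eigenvalues are listed in increasing order λ_1 < λ_2 < .... -/

import Mathlib

open Set

/-- `f` is an eigenfunction of `-f'' + V f = μ f` on `[0, L]` with Dirichlet
boundary conditions `f(0) = f(L) = 0`. -/
def DirichletEigenfunction (L : ℝ) (V : ℝ → ℝ) (μ : ℝ) (f : ℝ → ℝ) : Prop :=
  ContDiff ℝ 2 f ∧
  (∀ x ∈ Icc 0 L, -(deriv (deriv f) x) + V x * f x = μ * f x) ∧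
  f 0 = 0 ∧ f L = 0 ∧
  ∃ x ∈ Icc 0 L, f x ≠ 0


open Set Filter Real Topology

namespace SturmAux

lemma slope_pos_right {g : ℝ → ℝ} {d x : ℝ} (h : HasDerivAt g d x) (hd : 0 < d) :
    ∀ᶠ u in 𝓝[>] x, g x < g u := by
  have h1 : Tendsto (slope g x) (𝓝[≠] x) (𝓝 d) := hasDerivAt_iff_tendsto_slope.1 h
  have h2 : ∀ᶠ u in 𝓝[≠] x, 0 < slope g x u := h1.eventually (eventually_gt_nhds hd)
  have h3 : ∀ᶠ u in 𝓝[>] x, 0 < slope g x u :=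
    h2.filter_mono (nhdsWithin_mono _ fun u hu => ne_of_gt hu)
  filter_upwards [h3, self_mem_nhdsWithin] with u hu hu'
  have hx : (0:ℝ) < u - x := sub_pos.2 hu'
  have := mul_pos hu hx
  rw [slope_def_field] at this
  have : (0:ℝ) < g u - g x := by
    have h4 : (g u - g x) / (u - x) * (u - x) = g u - g x := div_mul_cancel₀ _ (ne_of_gt hx)
    calc (0:ℝ) < (g u - g x) / (u - x) * (u - x) := this
    _ = g u - g x := h4
  linarith

lemma slope_pos_left {g : ℝ → ℝ} {d x : ℝ} (h : HasDerivAt g d x) (hd : 0 < d) :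
    ∀ᶠ u in 𝓝[<] x, g u < g x := by
  have h1 : Tendsto (slope g x) (𝓝[≠] x) (𝓝 d) := hasDerivAt_iff_tendsto_slope.1 h
  have h2 : ∀ᶠ u in 𝓝[≠] x, 0 < slope g x u := h1.eventually (eventually_gt_nhds hd)
  have h3 : ∀ᶠ u in 𝓝[<] x, 0 < slope g x u :=
    h2.filter_mono (nhdsWithin_mono _ fun u hu => ne_of_lt hu)
  filter_upwards [h3, self_mem_nhdsWithin] with u hu hu'
  have hx : u - x < 0 := sub_neg.2 hu'
  rw [slope_def_field] at hu
  nlinarith [div_mul_cancel₀ (g u - g x) (ne_of_lt hx)]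

/-- If `g` is continuous, `g a ≥ 0` and `g b < 0`, there is a last zero crossing. -/
lemma last_crossing {g : ℝ → ℝ} {a b : ℝ} (hg : Continuous g) (hab : a ≤ b)
    (ha : 0 ≤ g a) (hb : g b < 0) :
    ∃ s ∈ Ico a b, g s = 0 ∧ ∀ t ∈ Ioc s b, g t < 0 := by
  set S : Set ℝ := Icc a b ∩ {t | 0 ≤ g t} with hS
  have hScl : IsClosed S := isClosed_Icc.inter (isClosed_le continuous_const hg)
  have hSne : S.Nonempty := ⟨a, ⟨le_refl a, hab⟩, ha⟩
  have hSbdd : BddAbove S := ⟨b, fun t ht => ht.1.2⟩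
  set s := sSup S with hs
  have hsS : s ∈ S := hScl.csSup_mem hSne hSbdd
  have hsb : s ≤ b := hsS.1.2
  have hsbne : s ≠ b := fun h => absurd (h ▸ hsS.2) (not_le.2 hb)
  have hslt : s < b := lt_of_le_of_ne hsb hsbne
  have hneg : ∀ t ∈ Ioc s b, g t < 0 := by
    intro t ht
    by_contra hc
    push_neg at hc
    have : t ∈ S := ⟨⟨le_trans hsS.1.1 (le_of_lt ht.1), ht.2⟩, hc⟩
    exact absurd (le_csSup hSbdd this) (not_le.2 ht.1)
  refine ⟨s, ⟨hsS.1.1, hslt⟩, ?_, hneg⟩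
  -- g s = 0
  refine le_antisymm ?_ hsS.2
  have htend : Tendsto g (𝓝[>] s) (𝓝 (g s)) :=
    (hg.continuousAt).continuousWithinAt.tendsto
  refine le_of_tendsto htend ?_
  filter_upwards [Ioc_mem_nhdsGT_of_mem ⟨le_refl s, hslt⟩] with t ht
  exact le_of_lt (hneg t ht)

/-- Barrier lemma: if `g a ≥ 0` and at every zero of `g` in `[a,b)` the function
eventually becomes positive to the right, then `g ≥ 0` on `[a,b]`. -/
lemma stay_nonneg {g : ℝ → ℝ} {a b : ℝ} (hg : Continuous g) (ha : 0 ≤ g a)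
    (key : ∀ t ∈ Ico a b, g t = 0 → ∀ᶠ u in 𝓝[>] t, 0 < g u) :
    ∀ t ∈ Icc a b, 0 ≤ g t := by
  intro t₁ ht₁
  by_contra hc
  push_neg at hc
  obtain ⟨s, hs, hgs, hneg⟩ := last_crossing hg ht₁.1 ha hc
  have hs' : s ∈ Ico a b := ⟨hs.1, lt_of_lt_of_le hs.2 ht₁.2⟩
  have hpos := key s hs' hgs
  have hmem : Ioc s t₁ ∈ 𝓝[>] s := Ioc_mem_nhdsGT_of_mem ⟨le_refl s, hs.2⟩
  obtain ⟨u, hu1, hu2⟩ := (hpos.and (eventually_of_mem hmem fun u hu => hu)).exists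
  exact absurd hu1 (not_lt.2 (le_of_lt (hneg u hu2)))


/-- The Prüfer vector field. -/
noncomputable def F (c : ℝ) (W : ℝ → ℝ) (t θ : ℝ) : ℝ :=
  cos θ ^ 2 + (c - W t) * sin θ ^ 2

lemma abs_cos_sub_cos_le (x y : ℝ) : |cos x - cos y| ≤ |x - y| := by
  rw [Real.cos_sub_cos]
  have h1 : |sin ((x + y) / 2)| ≤ 1 := abs_sin_le_one _
  have h2 : |sin ((x - y) / 2)| ≤ |(x - y) / 2| := abs_sin_le_abs
  have h3 : |(x - y) / 2| = |x - y| / 2 := by rw [abs_div]; norm_num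
  calc |(-2) * sin ((x + y) / 2) * sin ((x - y) / 2)|
      = 2 * (|sin ((x + y) / 2)| * |sin ((x - y) / 2)|) := by
        rw [abs_mul, abs_mul]; simp [mul_assoc]
    _ ≤ 2 * (1 * (|x - y| / 2)) := by
        apply mul_le_mul_of_nonneg_left _ (by norm_num)
        exact mul_le_mul h1 (h2.trans h3.le) (abs_nonneg _) zero_le_one
    _ = |x - y| := by ring

lemma abs_sin_sub_sin_le (x y : ℝ) : |sin x - sin y| ≤ |x - y| := by
  rw [Real.sin_sub_sin]
  have h1 : |cos ((x + y) / 2)| ≤ 1 := abs_cos_le_one _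
  have h2 : |sin ((x - y) / 2)| ≤ |(x - y) / 2| := abs_sin_le_abs
  have h3 : |(x - y) / 2| = |x - y| / 2 := by rw [abs_div]; norm_num
  calc |2 * sin ((x - y) / 2) * cos ((x + y) / 2)|
      = 2 * (|sin ((x - y) / 2)| * |cos ((x + y) / 2)|) := by
        rw [abs_mul, abs_mul]; simp [mul_assoc]
    _ ≤ 2 * ((|x - y| / 2) * 1) := by
        apply mul_le_mul_of_nonneg_left _ (by norm_num)
        exact mul_le_mul (h2.trans h3.le) h1 (abs_nonneg _) (by positivity)
    _ = |x - y| := by ring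

lemma abs_cos_sq_sub_le (x y : ℝ) : |cos x ^ 2 - cos y ^ 2| ≤ 2 * |x - y| := by
  have h : cos x ^ 2 - cos y ^ 2 = (cos x - cos y) * (cos x + cos y) := by ring
  rw [h, abs_mul]
  have h2 : |cos x + cos y| ≤ 2 := by
    calc |cos x + cos y| ≤ |cos x| + |cos y| := abs_add_le _ _
      _ ≤ 1 + 1 := add_le_add (abs_cos_le_one _) (abs_cos_le_one _)
      _ = 2 := by norm_num
  calc |cos x - cos y| * |cos x + cos y| ≤ |x - y| * 2 :=
        mul_le_mul (abs_cos_sub_cos_le x y) h2 (abs_nonneg _) (abs_nonneg _)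
    _ = 2 * |x - y| := by ring

lemma abs_sin_sq_sub_le (x y : ℝ) : |sin x ^ 2 - sin y ^ 2| ≤ 2 * |x - y| := by
  have h : sin x ^ 2 - sin y ^ 2 = (sin x - sin y) * (sin x + sin y) := by ring
  rw [h, abs_mul]
  have h2 : |sin x + sin y| ≤ 2 := by
    calc |sin x + sin y| ≤ |sin x| + |sin y| := abs_add_le _ _
      _ ≤ 1 + 1 := add_le_add (abs_sin_le_one _) (abs_sin_le_one _)
      _ = 2 := by norm_num
  calc |sin x - sin y| * |sin x + sin y| ≤ |x - y| * 2 :=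
        mul_le_mul (abs_sin_sub_sin_le x y) h2 (abs_nonneg _) (abs_nonneg _)
    _ = 2 * |x - y| := by ring

section W
variable {W : ℝ → ℝ} {M : ℝ}

lemma M_nonneg (hM : ∀ t, |W t| ≤ M) : 0 ≤ M := le_trans (abs_nonneg _) (hM 0)

lemma lipF_aux (hM : ∀ t, |W t| ≤ M) (c t : ℝ) (x y : ℝ) :
    |F c W t x - F c W t y| ≤ (2 + 2 * (|c| + M)) * |x - y| := by
  have hcW : |c - W t| ≤ |c| + M := by
    calc |c - W t| ≤ |c| + |W t| := abs_sub _ _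
      _ ≤ |c| + M := by linarith [hM t]
  have h1 : F c W t x - F c W t y
      = (cos x ^ 2 - cos y ^ 2) + (c - W t) * (sin x ^ 2 - sin y ^ 2) := by
    unfold F; ring
  rw [h1]
  calc |(cos x ^ 2 - cos y ^ 2) + (c - W t) * (sin x ^ 2 - sin y ^ 2)|
      ≤ |cos x ^ 2 - cos y ^ 2| + |c - W t| * |sin x ^ 2 - sin y ^ 2| := by
        rw [← abs_mul]; exact abs_add_le _ _
    _ ≤ 2 * |x - y| + (|c| + M) * (2 * |x - y|) := by
        refine add_le_add (abs_cos_sq_sub_le x y) ?_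
        exact mul_le_mul hcW (abs_sin_sq_sub_le x y) (abs_nonneg _)
          (add_nonneg (abs_nonneg _) (M_nonneg hM))
    _ = (2 + 2 * (|c| + M)) * |x - y| := by ring

lemma lipF (hM : ∀ t, |W t| ≤ M) (c t : ℝ) :
    LipschitzWith (Real.toNNReal (2 + 2 * (|c| + M))) (F c W t) := by
  rw [lipschitzWith_iff_dist_le_mul]
  intro x y
  simp only [Real.dist_eq]
  have hM0 : 0 ≤ M := M_nonneg hM
  rw [Real.coe_toNNReal _ (by positivity)]
  exact lipF_aux hM c t x y

lemma boundF (hM : ∀ t, |W t| ≤ M) (c t θ : ℝ) : |F c W t θ| ≤ 1 + (|c| + M) := by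
  have h1 : |cos θ ^ 2| ≤ 1 := by
    rw [abs_of_nonneg (sq_nonneg _)]; exact cos_sq_le_one θ
  have h2 : |(c - W t) * sin θ ^ 2| ≤ |c| + M := by
    rw [abs_mul]
    have ha : |c - W t| ≤ |c| + M := by
      calc |c - W t| ≤ |c| + |W t| := abs_sub _ _
        _ ≤ |c| + M := by linarith [hM t]
    have hb : |sin θ ^ 2| ≤ 1 := by
      rw [abs_of_nonneg (sq_nonneg _)]; exact sin_sq_le_one θ
    calc |c - W t| * |sin θ ^ 2| ≤ (|c| + M) * 1 :=
        mul_le_mul ha hb (abs_nonneg _) (add_nonneg (abs_nonneg _) (M_nonneg hM))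
      _ = |c| + M := by ring
  calc |F c W t θ| ≤ |cos θ ^ 2| + |(c - W t) * sin θ ^ 2| := abs_add_le _ _
    _ ≤ 1 + (|c| + M) := add_le_add h1 h2

lemma continuousF (hW : Continuous W) (c θ : ℝ) :
    Continuous (fun t => F c W t θ) := by
  unfold F; fun_prop

lemma existsSol (hW : Continuous W) (hM : ∀ t, |W t| ≤ M) (c : ℝ) (n : ℕ) :
    ∃ θ : ℝ → ℝ, θ 0 = 0 ∧ ∀ t ∈ Icc (-(n + 1 : ℝ)) (n + 1 : ℝ),
      HasDerivWithinAt θ (F c W t (θ t)) (Icc (-(n + 1 : ℝ)) (n + 1)) t := by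
  have hM0 : 0 ≤ M := M_nonneg hM
  set T : ℝ := (n : ℝ) + 1 with hT
  have hT0 : 0 < T := by positivity
  have hpl : IsPicardLindelof (F c W) (tmin := -T) (tmax := T) ⟨0, by constructor <;> linarith⟩ 0
      (Real.toNNReal ((1 + (|c| + M)) * T)) 0 (Real.toNNReal (1 + (|c| + M)))
      (Real.toNNReal (2 + 2 * (|c| + M))) := by
    constructor
    · exact fun t _ => (lipF hM c t).lipschitzOnWith
    · exact fun θ _ => (continuousF hW c θ).continuousOn
    · intro t _ θ _
      rw [Real.norm_eq_abs, Real.coe_toNNReal _ (by positivity)]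
      exact boundF hM c t θ
    · have : max (T - 0) (0 - -T) = T := by
        rw [sub_zero, zero_sub, neg_neg, max_self]
      simp only [NNReal.coe_zero, sub_zero] at this ⊢
      rw [this, Real.coe_toNNReal _ (by positivity), Real.coe_toNNReal _ (by positivity)]
  exact hpl.exists_eq_forall_mem_Icc_hasDerivWithinAt₀

end W
end SturmAux

namespace SturmAux
open Set Filter Real Topology

def thetaProp (c : ℝ) (W : ℝ → ℝ) (n : ℕ) (θ : ℝ → ℝ) : Prop :=
  θ 0 = 0 ∧ ∀ t ∈ Icc (-(n + 1 : ℝ)) (n + 1 : ℝ),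
    HasDerivWithinAt θ (F c W t (θ t)) (Icc (-(n + 1 : ℝ)) (n + 1)) t

open Classical in
noncomputable def thetaT (c : ℝ) (W : ℝ → ℝ) (n : ℕ) : ℝ → ℝ :=
  if h : ∃ θ, thetaProp c W n θ then h.choose else 0

section W
variable {W : ℝ → ℝ} {M : ℝ}

lemma thetaT_spec (hW : Continuous W) (hM : ∀ t, |W t| ≤ M) (c : ℝ) (n : ℕ) :
    thetaProp c W n (thetaT c W n) := by
  have h : ∃ θ, thetaProp c W n θ := existsSol hW hM c n
  classical
  rw [thetaT, dif_pos h]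
  exact h.choose_spec

lemma thetaT_contOn (hW : Continuous W) (hM : ∀ t, |W t| ≤ M) (c : ℝ) (n : ℕ) :
    ContinuousOn (thetaT c W n) (Icc (-(n + 1 : ℝ)) (n + 1)) :=
  fun t ht => ((thetaT_spec hW hM c n).2 t ht).continuousWithinAt

lemma thetaT_hasDerivAt (hW : Continuous W) (hM : ∀ t, |W t| ≤ M) (c : ℝ) (n : ℕ)
    {t : ℝ} (ht : t ∈ Ioo (-(n + 1 : ℝ)) (n + 1)) :
    HasDerivAt (thetaT c W n) (F c W t (thetaT c W n t)) t :=
  ((thetaT_spec hW hM c n).2 t (Ioo_subset_Icc_self ht)).hasDerivAt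
    (Icc_mem_nhds ht.1 ht.2)

lemma thetaT_agree (hW : Continuous W) (hM : ∀ t, |W t| ≤ M) (c : ℝ) {n k : ℕ}
    (hnk : n ≤ k) : EqOn (thetaT c W n) (thetaT c W k) (Icc (-(n + 1 : ℝ)) (n + 1)) := by
  have hsub : Icc (-(n + 1 : ℝ)) (n + 1) ⊆ Icc (-(k + 1 : ℝ)) (k + 1) := by
    apply Icc_subset_Icc
    · have : (n : ℝ) ≤ k := Nat.cast_le.2 hnk
      linarith
    · have : (n : ℝ) ≤ k := Nat.cast_le.2 hnk
      linarith
  have h0 : (0 : ℝ) ∈ Ioo (-(n + 1 : ℝ)) (n + 1) := by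
    constructor <;> [linarith [Nat.cast_nonneg (α := ℝ) n]; linarith [Nat.cast_nonneg (α := ℝ) n]]
  apply ODE_solution_unique_of_mem_Icc (v := F c W) (s := fun _ => univ)
    (K := Real.toNNReal (2 + 2 * (|c| + M))) (fun t _ => (lipF hM c t).lipschitzOnWith) h0
  · exact thetaT_contOn hW hM c n
  · exact fun t ht => thetaT_hasDerivAt hW hM c n ht
  · exact fun _ _ => mem_univ _
  · exact (thetaT_contOn hW hM c k).mono hsub
  · intro t ht
    have ht' : t ∈ Ioo (-(k + 1 : ℝ)) (k + 1) := by
      have h1 : -(k + 1 : ℝ) ≤ -(n + 1 : ℝ) := by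
        have : (n : ℝ) ≤ k := Nat.cast_le.2 hnk
        linarith
      have h2 : (n + 1 : ℝ) ≤ k + 1 := by
        have : (n : ℝ) ≤ k := Nat.cast_le.2 hnk
        linarith
      exact ⟨lt_of_le_of_lt h1 ht.1, lt_of_lt_of_le ht.2 h2⟩
    exact thetaT_hasDerivAt hW hM c k ht'
  · exact fun _ _ => mem_univ _
  · rw [(thetaT_spec hW hM c n).1, (thetaT_spec hW hM c k).1]

end W

noncomputable def theta (c : ℝ) (W : ℝ → ℝ) : ℝ → ℝ := fun t => thetaT c W ⌈|t|⌉₊ t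

section W
variable {W : ℝ → ℝ} {M : ℝ}

lemma mem_Icc_ceil (t : ℝ) : t ∈ Icc (-((⌈|t|⌉₊ : ℝ) + 1)) ((⌈|t|⌉₊ : ℝ) + 1) := by
  have h := Nat.le_ceil |t|
  have h1 : -((⌈|t|⌉₊ : ℝ)) ≤ t ∧ t ≤ (⌈|t|⌉₊ : ℝ) := abs_le.1 (le_trans (le_refl _) h)
  exact ⟨by linarith [h1.1], by linarith [h1.2]⟩

lemma theta_eq_thetaT (hW : Continuous W) (hM : ∀ t, |W t| ≤ M) (c : ℝ) (n : ℕ) :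
    EqOn (theta c W) (thetaT c W n) (Icc (-(n + 1 : ℝ)) (n + 1)) := by
  intro t ht
  have habs : |t| ≤ (n : ℝ) + 1 := abs_le.2 ⟨by linarith [ht.1], ht.2⟩
  have hm : ⌈|t|⌉₊ ≤ n + 1 := Nat.ceil_le.2 (by exact_mod_cast habs)
  rcases le_or_gt ⌈|t|⌉₊ n with h | h
  · exact thetaT_agree hW hM c h (mem_Icc_ceil t)
  · have heq : ⌈|t|⌉₊ = n + 1 := le_antisymm hm h
    have := (thetaT_agree hW hM c (Nat.le_succ n) ht).symm
    simpa [theta, heq] using this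
end W

namespace ThetaFacts
variable {W : ℝ → ℝ} {M : ℝ} (hW : Continuous W) (hM : ∀ t, |W t| ≤ M) (c : ℝ)
include hW hM

lemma theta_zero : theta c W 0 = 0 := by
  have h0 : (0:ℝ) ∈ Icc (-(0 + 1 : ℝ)) ((0:ℕ) + 1) := by norm_num
  have := theta_eq_thetaT hW hM c 0 (by norm_num : (0:ℝ) ∈ Icc (-((0:ℕ) + 1 : ℝ)) ((0:ℕ) + 1))
  rw [this, (thetaT_spec hW hM c 0).1]

lemma theta_hasDerivAt (t : ℝ) :
    HasDerivAt (theta c W) (F c W t (theta c W t)) t := by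
  set n := ⌈|t|⌉₊ with hn
  have ht : t ∈ Ioo (-(n + 1 : ℝ)) (n + 1) := by
    have h := Nat.le_ceil |t|
    have h1 := abs_le.1 h
    exact ⟨by linarith [h1.1], by linarith [h1.2]⟩
  have heq := theta_eq_thetaT hW hM c n
  have hd := thetaT_hasDerivAt hW hM c n ht
  have hval : thetaT c W n t = theta c W t := (heq (Ioo_subset_Icc_self ht)).symm
  rw [hval] at hd
  apply hd.congr_of_eventuallyEq
  exact eventually_of_mem (Icc_mem_nhds ht.1 ht.2) heq

lemma theta_continuous : Continuous (theta c W) := by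
  have : Differentiable ℝ (theta c W) :=
    fun t => (theta_hasDerivAt hW hM c t).differentiableAt
  exact this.continuous

end ThetaFacts
end SturmAux

namespace SturmAux
open Set Filter Real Topology

namespace ThetaFacts
variable {W : ℝ → ℝ} {M : ℝ} (hW : Continuous W) (hM : ∀ t, |W t| ≤ M) (c : ℝ)
include hW hM

lemma F_at_mul_pi (k : ℤ) (t : ℝ) : F c W t ((k : ℝ) * π) = 1 := by
  have h1 : Real.sin ((k : ℝ) * π) = 0 := Real.sin_int_mul_pi k
  have h2 := Real.sin_sq_add_cos_sq ((k : ℝ) * π)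
  unfold F
  rw [h1]
  nlinarith

lemma theta_stays_ge (k : ℤ) {a b : ℝ} (hab : a ≤ b)
    (ha : (k : ℝ) * π ≤ theta c W a) : (k : ℝ) * π ≤ theta c W b := by
  have key : ∀ t ∈ Ico a b, (fun t => theta c W t - (k : ℝ) * π) t = 0 →
      ∀ᶠ u in 𝓝[>] t, 0 < theta c W u - (k : ℝ) * π := by
    intro t _ ht
    have hθ : theta c W t = (k : ℝ) * π := by linarith [sub_eq_zero.1 ht]
    have hd : HasDerivAt (fun u => theta c W u - (k : ℝ) * π) 1 t := by
      have := (theta_hasDerivAt hW hM c t).sub_const ((k : ℝ) * π)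
      rwa [hθ, F_at_mul_pi hW hM c k t] at this
    have ht' : theta c W t - (k : ℝ) * π = 0 := ht
    have := slope_pos_right hd one_pos
    filter_upwards [this] with u hu
    linarith [hu]
  have := stay_nonneg (g := fun t => theta c W t - (k : ℝ) * π)
    (by have := theta_continuous hW hM c; fun_prop)
    (show (0:ℝ) ≤ theta c W a - (k : ℝ) * π by linarith) key b ⟨hab, le_refl b⟩
  try simp only at this
  linarith

lemma theta_cross_unique (k : ℤ) {s t : ℝ} (hst : s < t)
    (hs : theta c W s = (k : ℝ) * π) (ht : theta c W t = (k : ℝ) * π) : False := by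
  have hge : ∀ u ∈ Icc s t, (k : ℝ) * π ≤ theta c W u :=
    fun u hu => theta_stays_ge hW hM c k hu.1 hs.ge
  have hd : HasDerivAt (theta c W) 1 t := by
    have := theta_hasDerivAt hW hM c t
    rwa [ht, F_at_mul_pi hW hM c k t] at this
  have hev := slope_pos_left hd one_pos
  have hmem : Ioo s t ∈ 𝓝[<] t := Ioo_mem_nhdsLT_of_mem ⟨hst, le_refl t⟩
  obtain ⟨u, hu1, hu2⟩ := (hev.and (eventually_of_mem hmem fun u hu => hu)).exists
  have := hge u ⟨le_of_lt hu2.1, le_of_lt hu2.2⟩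
  rw [ht] at hu1
  linarith

lemma theta_nonneg {t : ℝ} (ht : 0 ≤ t) : 0 ≤ theta c W t := by
  have := theta_stays_ge hW hM c 0 ht (by rw [theta_zero hW hM c]; simp)
  simpa using this

lemma theta_pos {t : ℝ} (ht : 0 < t) : 0 < theta c W t := by
  rcases lt_or_eq_of_le (theta_nonneg hW hM c (le_of_lt ht)) with h | h
  · exact h
  · exfalso
    apply theta_cross_unique hW hM c 0 ht (by rw [theta_zero hW hM c]; simp)
    simp [← h]

lemma theta_stays_gt (k : ℤ) {a b : ℝ} (hab : a ≤ b)
    (ha : (k : ℝ) * π < theta c W a) : (k : ℝ) * π < theta c W b := by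
  rcases lt_or_eq_of_le (theta_stays_ge hW hM c k hab (le_of_lt ha)) with h | h
  · exact h
  · exfalso
    rcases eq_or_lt_of_le hab with rfl | hab'
    · linarith
    have hge : ∀ u ∈ Icc a b, (k : ℝ) * π ≤ theta c W u :=
      fun u hu => theta_stays_ge hW hM c k hu.1 (le_of_lt ha)
    have hd : HasDerivAt (theta c W) 1 b := by
      have := theta_hasDerivAt hW hM c b
      rwa [← h, F_at_mul_pi hW hM c k b] at this
    have hev := slope_pos_left hd one_pos
    have hmem : Ioo a b ∈ 𝓝[<] b := Ioo_mem_nhdsLT_of_mem ⟨hab', le_refl b⟩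
    obtain ⟨u, hu1, hu2⟩ := (hev.and (eventually_of_mem hmem fun u hu => hu)).exists
    have := hge u ⟨le_of_lt hu2.1, le_of_lt hu2.2⟩
    rw [← h] at hu1
    linarith

/-- Counting zeros of `sin ∘ theta` in `(0, L)` when `theta L = m π`. -/
lemma count_zeros {L : ℝ} (hL : 0 < L) (m : ℕ) (hm : 1 ≤ m)
    (hΘ : theta c W L = (m : ℝ) * π) :
    {x ∈ Ioo 0 L | Real.sin (theta c W x) = 0}.ncard = m - 1 := by
  have hcont := theta_continuous hW hM c
  have hθ0 := theta_zero hW hM c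
  -- existence of crossing points
  have hex : ∀ k : ℕ, ∃ x : ℝ, 1 ≤ k → k ≤ m - 1 →
      x ∈ Ioo 0 L ∧ theta c W x = (k : ℝ) * π := by
    intro k
    by_cases hk : 1 ≤ k ∧ k ≤ m - 1
    · obtain ⟨hk1, hk2⟩ := hk
      have hkm : (k : ℝ) < m := by
        have : k < m := by omega
        exact_mod_cast this
      have hmem : (k : ℝ) * π ∈ Icc (theta c W 0) (theta c W L) := by
        rw [hθ0, hΘ]
        constructor
        · positivity
        · have := pi_pos
          nlinarith
      obtain ⟨x, hx, hθx⟩ := intermediate_value_Icc (le_of_lt hL)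
        hcont.continuousOn hmem
      have hx0 : x ≠ 0 := by
        intro h
        rw [h, hθ0] at hθx
        have := pi_pos
        have : (k : ℝ) ≥ 1 := by exact_mod_cast hk1
        nlinarith
      have hxL : x ≠ L := by
        intro h
        rw [h, hΘ] at hθx
        have hkm' : (m : ℝ) = k := mul_right_cancel₀ pi_ne_zero hθx
        nlinarith
      exact ⟨x, fun _ _ => ⟨⟨lt_of_le_of_ne hx.1 (Ne.symm hx0), lt_of_le_of_ne hx.2 hxL⟩, hθx⟩⟩
    · exact ⟨0, fun h1 h2 => absurd ⟨h1, h2⟩ hk⟩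
  choose ζ hζ using hex
  have hζmem : ∀ k ∈ Finset.Icc 1 (m - 1), ζ k ∈ Ioo 0 L ∧ theta c W (ζ k) = (k : ℝ) * π := by
    intro k hk
    rw [Finset.mem_Icc] at hk
    exact hζ k hk.1 hk.2
  -- the zero set equals the image
  have hset : {x ∈ Ioo 0 L | Real.sin (theta c W x) = 0}
      = ↑((Finset.Icc 1 (m - 1)).image ζ) := by
    ext x
    simp only [Finset.coe_image, mem_image, Finset.mem_coe, Finset.mem_Icc,
      mem_setOf_eq, mem_sep_iff]
    constructor
    · rintro ⟨hx, hsin⟩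
      obtain ⟨j, hj⟩ := Real.sin_eq_zero_iff.1 hsin
      have hθpos : 0 < theta c W x := theta_pos hW hM c hx.1
      have hθlt : theta c W x < (m : ℝ) * π := by
        rcases lt_trichotomy (theta c W x) ((m : ℝ) * π) with h | h | h
        · exact h
        · exfalso
          exact theta_cross_unique hW hM c (m : ℤ) hx.2
            (by push_cast; exact h) (by push_cast; exact hΘ)
        · exfalso
          have := theta_stays_gt hW hM c (m : ℤ) (le_of_lt hx.2) (by push_cast; exact h)
          push_cast at this
          rw [hΘ] at this
          exact lt_irrefl _ this
      have hj0 : 0 < j := by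
        by_contra h
        push_neg at h
        have : (j : ℝ) * π ≤ 0 := mul_nonpos_of_nonpos_of_nonneg (by exact_mod_cast h) pi_pos.le
        linarith [hj ▸ hθpos]
      have hjm : j < m := by
        by_contra h
        push_neg at h
        have : (m : ℝ) * π ≤ (j : ℝ) * π := by
          have : (m : ℝ) ≤ (j : ℝ) := by exact_mod_cast h
          nlinarith [pi_pos]
        linarith [hj ▸ hθlt]
      refine ⟨j.toNat, ⟨?_, ?_⟩, ?_⟩
      · omega
      · omega
      · -- x = ζ j.toNat
        have hjt : ((j.toNat : ℕ) : ℝ) = (j : ℝ) := by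
          have : (j.toNat : ℤ) = j := Int.toNat_of_nonneg (le_of_lt hj0)
          exact_mod_cast this
        have hmem := hζmem j.toNat (Finset.mem_Icc.2 ⟨by omega, by omega⟩)
        by_contra hne
        rcases lt_or_gt_of_ne hne with h | h
        · exact theta_cross_unique hW hM c j h
            (by rw [hmem.2, hjt]) (by rw [← hj])
        · exact theta_cross_unique hW hM c j h (by rw [← hj]) (by rw [hmem.2, hjt])
    · rintro ⟨k, hk, rfl⟩
      have hmem := hζmem k (Finset.mem_Icc.2 hk)
      refine ⟨hmem.1, ?_⟩
      rw [hmem.2]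
      exact Real.sin_int_mul_pi k
  rw [hset, Set.ncard_coe_finset]
  rw [Finset.card_image_of_injOn, Nat.card_Icc]
  · omega
  · intro a ha b hb hab
    have h1 := (hζmem a ha).2
    have h2 := (hζmem b hb).2
    rw [hab, h2] at h1
    have : (b : ℝ) = a := mul_right_cancel₀ pi_ne_zero h1
    exact_mod_cast this.symm

end ThetaFacts
end SturmAux

namespace SturmAux
open Set Filter Real Topology

namespace ThetaFacts
variable {W : ℝ → ℝ} {M : ℝ} (hW : Continuous W) (hM : ∀ t, |W t| ≤ M)
include hW hM

lemma theta_mono {c c' : ℝ} (hcc : c ≤ c') {t : ℝ} (ht : 0 ≤ t) :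
    theta c W t ≤ theta c' W t := by
  by_contra hcon
  push_neg at hcon
  set d : ℝ → ℝ := fun u => theta c' W u - theta c W u with hd
  have hdc : Continuous d := ((theta_continuous hW hM c').sub (theta_continuous hW hM c))
  have hd0 : d 0 = 0 := by
    simp [hd, theta_zero hW hM c, theta_zero hW hM c']
  have hdt : d t < 0 := by simp only [hd]; linarith
  obtain ⟨s, hs, hds, hneg⟩ := last_crossing hdc ht hd0.ge hdt
  set K : ℝ := 2 + 2 * (|c'| + M) with hK
  set h : ℝ → ℝ := fun u => Real.exp (-K * u) * d u with hh
  have hdd : ∀ u, HasDerivAt d (F c' W u (theta c' W u) - F c W u (theta c W u)) u :=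
    fun u => (theta_hasDerivAt hW hM c' u).sub (theta_hasDerivAt hW hM c u)
  have hhd : ∀ u, HasDerivAt h (Real.exp (-K * u) *
      ((F c' W u (theta c' W u) - F c W u (theta c W u)) - K * d u)) u := by
    intro u
    have h1 : HasDerivAt (fun v : ℝ => -K * v) (-K) u := by
      simpa using (hasDerivAt_id u).const_mul (-K)
    have h2 := (h1.exp).mul (hdd u)
    convert h2 using 1 <;> try rfl
    ring
  have hmono : MonotoneOn h (Icc s t) := by
    apply monotoneOn_of_deriv_nonneg (convex_Icc s t)
      (Continuous.continuousOn (by fun_prop))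
      (fun u _ => ((hhd u).differentiableAt).differentiableWithinAt)
    intro u hu
    rw [interior_Icc] at hu
    rw [(hhd u).deriv]
    have hdu : d u < 0 := hneg u ⟨hu.1, hu.2.le⟩
    have hlip : |F c' W u (theta c' W u) - F c' W u (theta c W u)|
        ≤ K * |theta c' W u - theta c W u| := lipF_aux hM c' u _ _
    have hpos : F c' W u (theta c W u) - F c W u (theta c W u)
        = (c' - c) * Real.sin (theta c W u) ^ 2 := by
      unfold F; ring
    have h3 : F c' W u (theta c' W u) - F c W u (theta c W u)
        = (F c' W u (theta c' W u) - F c' W u (theta c W u))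
          + (F c' W u (theta c W u) - F c W u (theta c W u)) := by ring
    have h4 : 0 ≤ (c' - c) * Real.sin (theta c W u) ^ 2 := by
      apply mul_nonneg (by linarith) (sq_nonneg _)
    have h5 : |theta c' W u - theta c W u| = -(d u) := by
      rw [abs_of_neg hdu]
    have h6 : F c' W u (theta c' W u) - F c' W u (theta c W u) ≥ K * d u := by
      have := neg_abs_le (F c' W u (theta c' W u) - F c' W u (theta c W u))
      have h7 : K * |theta c' W u - theta c W u| = -(K * d u) := by rw [h5]; ring
      nlinarith [abs_nonneg (F c' W u (theta c' W u) - F c' W u (theta c W u))]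
    have : F c' W u (theta c' W u) - F c W u (theta c W u) - K * d u ≥ 0 := by
      rw [h3]; linarith
    positivity
  have h1 : h s ≤ h t := hmono ⟨le_refl s, hs.2.le⟩ ⟨hs.2.le, le_refl t⟩
    (hs.2.le)
  have h2 : h s = 0 := by simp [hh, hds]
  have h3 : h t < 0 := by
    have : Real.exp (-K * t) > 0 := Real.exp_pos _
    simp only [hh]
    exact mul_neg_of_pos_of_neg this hdt
  linarith

lemma theta_strict {c c' : ℝ} (hcc : c < c') {t : ℝ} (ht : 0 < t) :
    theta c W t < theta c' W t := by
  rcases lt_or_eq_of_le (theta_mono hW hM hcc.le ht.le) with h | h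
  · exact h
  exfalso
  set d : ℝ → ℝ := fun u => theta c' W u - theta c W u with hd
  have hd0 : d 0 = 0 := by simp [hd, theta_zero hW hM c, theta_zero hW hM c']
  have hdt : d t = 0 := by simp [hd, ← h]
  have hdnn : ∀ u ∈ Icc (0:ℝ) t, 0 ≤ d u := fun u hu => by
    simp only [hd, sub_nonneg]
    exact theta_mono hW hM hcc.le hu.1
  set K : ℝ := 2 + 2 * (|c'| + M) with hK
  set h2 : ℝ → ℝ := fun u => Real.exp (K * u) * d u with hh2
  have hdd : ∀ u, HasDerivAt d (F c' W u (theta c' W u) - F c W u (theta c W u)) u :=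
    fun u => (theta_hasDerivAt hW hM c' u).sub (theta_hasDerivAt hW hM c u)
  have hh2d : ∀ u, HasDerivAt h2 (Real.exp (K * u) *
      ((F c' W u (theta c' W u) - F c W u (theta c W u)) + K * d u)) u := by
    intro u
    have h1 : HasDerivAt (fun v : ℝ => K * v) K u := by
      simpa using (hasDerivAt_id u).const_mul K
    have hx := (h1.exp).mul (hdd u)
    convert hx using 1 <;> try rfl
    ring
  have hmono : MonotoneOn h2 (Icc 0 t) := by
    apply monotoneOn_of_deriv_nonneg (convex_Icc 0 t)
      (Continuous.continuousOn (by
        have := (theta_continuous hW hM c'); have := (theta_continuous hW hM c); fun_prop))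
      (fun u _ => ((hh2d u).differentiableAt).differentiableWithinAt)
    intro u hu
    rw [interior_Icc] at hu
    rw [(hh2d u).deriv]
    have hdu : 0 ≤ d u := hdnn u (Ioo_subset_Icc_self hu)
    have hlip : |F c' W u (theta c' W u) - F c' W u (theta c W u)|
        ≤ K * |theta c' W u - theta c W u| := lipF_aux hM c' u _ _
    have h5 : |theta c' W u - theta c W u| = d u := by
      rw [abs_of_nonneg hdu]
    have h3 : F c' W u (theta c' W u) - F c W u (theta c W u)
        = (F c' W u (theta c' W u) - F c' W u (theta c W u))
          + (c' - c) * Real.sin (theta c W u) ^ 2 := by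
      unfold F; ring
    have h4 : 0 ≤ (c' - c) * Real.sin (theta c W u) ^ 2 :=
      mul_nonneg (by linarith) (sq_nonneg _)
    have h6 : F c' W u (theta c' W u) - F c' W u (theta c W u) ≥ -(K * d u) := by
      rw [h5] at hlip
      nlinarith [neg_abs_le (F c' W u (theta c' W u) - F c' W u (theta c W u))]
    have : (F c' W u (theta c' W u) - F c W u (theta c W u)) + K * d u ≥ 0 := by
      rw [h3]; linarith
    positivity
  -- h2 vanishes at both ends, is monotone and nonneg, hence ≡ 0
  have hzero : ∀ u ∈ Icc (0:ℝ) t, d u = 0 := by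
    intro u hu
    have ha : h2 u ≤ h2 t := hmono hu ⟨ht.le, le_refl t⟩ hu.2
    have hb : h2 t = 0 := by simp [hh2, hdt]
    have hc : 0 ≤ h2 u := mul_nonneg (Real.exp_pos _).le (hdnn u hu)
    have : h2 u = 0 := le_antisymm (hb ▸ ha) hc
    have hexp := Real.exp_pos (K * u)
    simp only [hh2] at this
    rcases mul_eq_zero.1 this with h' | h'
    · linarith
    · exact h'
  -- hence sin (theta c W u) = 0 on (0, t)
  have hsin : ∀ u ∈ Ioo (0:ℝ) t, Real.sin (theta c W u) = 0 := by
    intro u hu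
    have hloc : d =ᶠ[nhds u] (fun _ => (0:ℝ)) := by
      filter_upwards [Ioo_mem_nhds hu.1 hu.2] with v hv
      exact hzero v (Ioo_subset_Icc_self hv)
    have hd0' : HasDerivAt d 0 u := by
      have : HasDerivAt (fun _ : ℝ => (0:ℝ)) 0 u := hasDerivAt_const u 0
      exact this.congr_of_eventuallyEq hloc
    have := (hdd u).unique hd0'
    have hequ : theta c' W u = theta c W u := by
      have := hzero u ⟨hu.1.le, hu.2.le⟩
      simp only [hd] at this
      linarith
    rw [hequ] at this
    have hF : F c' W u (theta c W u) - F c W u (theta c W u)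
        = (c' - c) * Real.sin (theta c W u) ^ 2 := by unfold F; ring
    rw [hF] at this
    have hsq : Real.sin (theta c W u) ^ 2 = 0 := by
      rcases mul_eq_zero.1 this with h' | h'
      · linarith
      · exact h'
    exact pow_eq_zero_iff (by norm_num) |>.1 hsq
  -- but near 0, theta c W is in (0, π)
  have hct : ContinuousAt (theta c W) 0 := (theta_continuous hW hM c).continuousAt
  rw [Metric.continuousAt_iff] at hct
  obtain ⟨δ, hδ0, hδ⟩ := hct π Real.pi_pos
  set u : ℝ := min δ t / 2 with hu
  have hu0 : 0 < u := by positivity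
  have hut : u < t := by
    have h1 : u ≤ t / 2 := by
      simp only [hu]
      linarith [min_le_right δ t]
    linarith
  have husmall : dist u 0 < δ := by
    rw [Real.dist_eq, sub_zero, abs_of_pos hu0]
    have : u ≤ δ / 2 := by
      simp only [hu]
      have := min_le_left δ t
      linarith
    linarith
  have hθu := hδ husmall
  rw [Real.dist_eq, theta_zero hW hM c, sub_zero] at hθu
  have hθpos : 0 < theta c W u := theta_pos hW hM c hu0
  have : 0 < Real.sin (theta c W u) :=
    Real.sin_pos_of_pos_of_lt_pi hθpos (lt_of_le_of_lt (le_abs_self _) hθu)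
  have := hsin u ⟨hu0, hut⟩
  linarith

end ThetaFacts
end SturmAux

namespace SturmAux
open Set Filter Real Topology

namespace ThetaFacts
variable {W : ℝ → ℝ} {M : ℝ} (hW : Continuous W) (hM : ∀ t, |W t| ≤ M)
include hW hM

lemma thetaL_cont (t : ℝ) (ht : 0 ≤ t) : Continuous (fun c => theta c W t) := by
  rw [continuous_iff_continuousAt]
  intro c₀
  rw [Metric.continuousAt_iff]
  intro ε hε
  set K : NNReal := Real.toNNReal (2 + 2 * (|c₀| + M)) with hKdef
  have hφ : Continuous (fun e => gronwallBound 0 (K : ℝ) e t) :=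
    gronwallBound_continuous_ε 0 (K : ℝ) t
  have hφ0 : gronwallBound 0 (K : ℝ) 0 t = 0 := gronwallBound_ε0_δ0 _ _
  have hφat : ContinuousAt (fun e => gronwallBound 0 (K : ℝ) e t) 0 := hφ.continuousAt
  rw [Metric.continuousAt_iff] at hφat
  obtain ⟨δ, hδ0, hδ⟩ := hφat ε hε
  refine ⟨δ, hδ0, ?_⟩
  intro c' hc'
  have key : dist (theta c' W t) (theta c₀ W t)
      ≤ gronwallBound 0 (K : ℝ) (dist c' c₀ + 0) (t - 0) := by
    apply dist_le_of_approx_trajectories_ODE (v := F c₀ W)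
      (f := theta c' W) (g := theta c₀ W)
      (f' := fun s => F c' W s (theta c' W s)) (g' := fun s => F c₀ W s (theta c₀ W s))
      (fun s => lipF hM c₀ s)
      ((theta_continuous hW hM c').continuousOn)
      (fun s _ => (theta_hasDerivAt hW hM c' s).hasDerivWithinAt)
      ?_
      ((theta_continuous hW hM c₀).continuousOn)
      (fun s _ => (theta_hasDerivAt hW hM c₀ s).hasDerivWithinAt)
      (fun s _ => by rw [dist_self])
      (by rw [theta_zero hW hM c', theta_zero hW hM c₀, dist_self])
      t ⟨ht, le_refl t⟩
    · intro s _
      have : F c' W s (theta c' W s) - F c₀ W s (theta c' W s)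
          = (c' - c₀) * Real.sin (theta c' W s) ^ 2 := by unfold F; ring
      rw [Real.dist_eq, this, Real.dist_eq, abs_mul]
      calc |c' - c₀| * |Real.sin (theta c' W s) ^ 2| ≤ |c' - c₀| * 1 := by
            apply mul_le_mul_of_nonneg_left _ (abs_nonneg _)
            rw [abs_of_nonneg (sq_nonneg _)]
            exact sin_sq_le_one _
        _ = |c' - c₀| := by ring
  rw [add_zero, sub_zero] at key
  have h2 := hδ (show dist (dist c' c₀) 0 < δ by
    rw [Real.dist_eq, sub_zero, abs_of_nonneg dist_nonneg]; exact hc')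
  rw [Real.dist_eq, hφ0, sub_zero] at h2
  calc dist (theta c' W t) (theta c₀ W t) ≤ gronwallBound 0 (K : ℝ) (dist c' c₀) t := key
    _ ≤ |gronwallBound 0 (K : ℝ) (dist c' c₀) t| := le_abs_self _
    _ < ε := h2

lemma theta_low {c : ℝ} (hc : c ≤ -M - 2) {t : ℝ} (ht : 0 ≤ t) :
    theta c W t < π := by
  have hsin34 : Real.sin (3 * π / 4) ^ 2 = 1 / 2 := by
    have h34 : 3 * π / 4 = π - π / 4 := by ring
    rw [h34, Real.sin_pi_sub, Real.sin_pi_div_four]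
    rw [div_pow, Real.sq_sqrt (by norm_num : (0:ℝ) ≤ 2)]
    norm_num
  have hcos34 : Real.cos (3 * π / 4) ^ 2 = 1 / 2 := by
    have := Real.sin_sq_add_cos_sq (3 * π / 4)
    linarith
  have key : ∀ u ∈ Ico 0 t, (fun u => 3 * π / 4 - theta c W u) u = 0 →
      ∀ᶠ v in 𝓝[>] u, 0 < 3 * π / 4 - theta c W v := by
    intro u _ hu
    have hθ : theta c W u = 3 * π / 4 := by linarith [sub_eq_zero.1 hu]
    have hF : F c W u (theta c W u) ≤ -1/2 := by
      rw [hθ]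
      unfold F
      rw [hsin34, hcos34]
      have hWu : -M ≤ W u := by linarith [abs_le.1 (hM u) |>.1]
      nlinarith
    have hd : HasDerivAt (fun v => 3 * π / 4 - theta c W v)
        (-(F c W u (theta c W u))) u := (theta_hasDerivAt hW hM c u).const_sub _
    have := slope_pos_right hd (by linarith)
    filter_upwards [this] with v hv
    have hu' : 3 * π / 4 - theta c W u = 0 := hu
    linarith [hv]
  have h0 : (0:ℝ) ≤ 3 * π / 4 - theta c W 0 := by
    rw [theta_zero hW hM c]
    linarith [Real.pi_pos]
  have := stay_nonneg (g := fun u => 3 * π / 4 - theta c W u)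
    (by have := theta_continuous hW hM c; fun_prop) h0 key t ⟨ht, le_refl t⟩
  try simp only at this
  linarith [Real.pi_pos]

end ThetaFacts
end SturmAux

namespace SturmAux
open Set Filter Real Topology

noncomputable def rho (c : ℝ) (W : ℝ → ℝ) (t : ℝ) : ℝ :=
  ∫ s in (0:ℝ)..t, (1 + W s - c) * Real.sin (theta c W s) * Real.cos (theta c W s)

noncomputable def efn (c : ℝ) (W : ℝ → ℝ) (t : ℝ) : ℝ :=
  Real.exp (rho c W t) * Real.sin (theta c W t)

noncomputable def efd (c : ℝ) (W : ℝ → ℝ) (t : ℝ) : ℝ :=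
  Real.exp (rho c W t) * Real.cos (theta c W t)

namespace ThetaFacts
variable {W : ℝ → ℝ} {M : ℝ} (hW : Continuous W) (hM : ∀ t, |W t| ≤ M) (c : ℝ)
include hW hM

lemma integrand_continuous :
    Continuous (fun s => (1 + W s - c) * Real.sin (theta c W s) * Real.cos (theta c W s)) := by
  have := theta_continuous hW hM c
  fun_prop

lemma rho_hasDerivAt (t : ℝ) :
    HasDerivAt (rho c W)
      ((1 + W t - c) * Real.sin (theta c W t) * Real.cos (theta c W t)) t :=
  ((integrand_continuous hW hM c).integral_hasStrictDerivAt 0 t).hasDerivAt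

lemma rho_zero : rho c W 0 = 0 := by
  simp [rho]

lemma efn_hasDerivAt (t : ℝ) : HasDerivAt (efn c W) (efd c W t) t := by
  have h1 := ((rho_hasDerivAt hW hM c t).exp).mul
    ((theta_hasDerivAt hW hM c t).sin)
  convert h1 using 1 <;> try rfl
  have hsc := Real.sin_sq_add_cos_sq (theta c W t)
  unfold efd F
  set e := Real.exp (rho c W t)
  set s := Real.sin (theta c W t)
  set b := Real.cos (theta c W t)
  linear_combination (-(e * b)) * hsc

lemma efd_hasDerivAt (t : ℝ) :
    HasDerivAt (efd c W) ((W t - c) * efn c W t) t := by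
  have h1 := ((rho_hasDerivAt hW hM c t).exp).mul
    ((theta_hasDerivAt hW hM c t).cos)
  convert h1 using 1 <;> try rfl
  have hsc := Real.sin_sq_add_cos_sq (theta c W t)
  unfold efn F
  set e := Real.exp (rho c W t)
  set s := Real.sin (theta c W t)
  set b := Real.cos (theta c W t)
  linear_combination (-((W t - c) * e * s)) * hsc

lemma efn_differentiable : Differentiable ℝ (efn c W) :=
  fun t => (efn_hasDerivAt hW hM c t).differentiableAt

lemma deriv_efn : deriv (efn c W) = efd c W :=
  funext fun t => (efn_hasDerivAt hW hM c t).deriv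

lemma efd_differentiable : Differentiable ℝ (efd c W) :=
  fun t => (efd_hasDerivAt hW hM c t).differentiableAt

lemma deriv_efd : deriv (efd c W) = fun t => (W t - c) * efn c W t :=
  funext fun t => (efd_hasDerivAt hW hM c t).deriv

lemma efn_contDiff : ContDiff ℝ 2 (efn c W) := by
  have e21 : (2 : WithTop ℕ∞) = 1 + 1 := by norm_num
  rw [e21, contDiff_succ_iff_deriv]
  refine ⟨efn_differentiable hW hM c, by simp, ?_⟩
  rw [deriv_efn hW hM c, contDiff_one_iff_deriv]
  refine ⟨efd_differentiable hW hM c, ?_⟩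
  rw [deriv_efd hW hM c]
  have h1 := theta_continuous hW hM c
  have h2 : Continuous (efn c W) := (efn_differentiable hW hM c).continuous
  fun_prop

lemma efn_zero : efn c W 0 = 0 := by
  rw [efn, theta_zero hW hM c]
  simp

lemma efn_eq_zero_iff (t : ℝ) : efn c W t = 0 ↔ Real.sin (theta c W t) = 0 := by
  rw [efn]
  constructor
  · intro h
    rcases mul_eq_zero.1 h with h' | h'
    · exact absurd h' (Real.exp_ne_zero _)
    · exact h'
  · intro h
    rw [h, mul_zero]

end ThetaFacts
end SturmAux

namespace SturmAux
open Set Filter Real Topology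

def G (c : ℝ) (W : ℝ → ℝ) (t : ℝ) (p : ℝ × ℝ) : ℝ × ℝ := (p.2, (W t - c) * p.1)

namespace ThetaFacts
variable {W : ℝ → ℝ} {M : ℝ} (hW : Continuous W) (hM : ∀ t, |W t| ≤ M)
include hW hM

lemma lipG (c t : ℝ) : LipschitzWith (Real.toNNReal (1 + (|c| + M))) (G c W t) := by
  have hM0 : 0 ≤ M := M_nonneg hM
  rw [lipschitzWith_iff_dist_le_mul]
  intro p q
  rw [Real.coe_toNNReal _ (by positivity)]
  rw [Prod.dist_eq, Prod.dist_eq]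
  simp only [G, Real.dist_eq]
  apply max_le
  · calc |p.2 - q.2| ≤ max |p.1 - q.1| |p.2 - q.2| := le_max_right _ _
      _ ≤ (1 + (|c| + M)) * max |p.1 - q.1| |p.2 - q.2| := by
          nlinarith [le_max_left |p.1 - q.1| |p.2 - q.2|, abs_nonneg (p.1 - q.1),
            abs_nonneg (p.2 - q.2), abs_nonneg c]
  · have h1 : |(W t - c) * p.1 - (W t - c) * q.1| = |W t - c| * |p.1 - q.1| := by
      rw [← abs_mul]; ring_nf
    rw [h1]
    have h2 : |W t - c| ≤ |c| + M := by
      calc |W t - c| ≤ |W t| + |c| := abs_sub _ _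
        _ ≤ |c| + M := by linarith [hM t]
    calc |W t - c| * |p.1 - q.1| ≤ (|c| + M) * |p.1 - q.1| :=
          mul_le_mul_of_nonneg_right h2 (abs_nonneg _)
      _ ≤ (|c| + M) * max |p.1 - q.1| |p.2 - q.2| := by
          apply mul_le_mul_of_nonneg_left (le_max_left _ _) (by positivity)
      _ ≤ (1 + (|c| + M)) * max |p.1 - q.1| |p.2 - q.2| := by
          nlinarith [le_max_left |p.1 - q.1| |p.2 - q.2|, abs_nonneg (p.1 - q.1),
            abs_nonneg (p.2 - q.2)]

lemma sol_eq {L c : ℝ} (hL : 0 ≤ L) {f : ℝ → ℝ} (hf2 : ContDiff ℝ 2 f)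
    (heq : ∀ x ∈ Icc 0 L, deriv (deriv f) x = (W x - c) * f x)
    (hf0 : f 0 = 0) :
    ∀ x ∈ Icc 0 L, f x = deriv f 0 * efn c W x ∧ deriv f x = deriv f 0 * efd c W x := by
  have e21 : (2 : WithTop ℕ∞) = 1 + 1 := by norm_num
  rw [e21, contDiff_succ_iff_deriv] at hf2
  obtain ⟨hfd, -, hfd1⟩ := hf2
  have hdfd : Differentiable ℝ (deriv f) := hfd1.differentiable one_ne_zero
  set d₀ := deriv f 0 with hd₀
  set Ff : ℝ → ℝ × ℝ := fun t => (f t, deriv f t) with hFf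
  set Fg : ℝ → ℝ × ℝ := fun t => (d₀ * efn c W t, d₀ * efd c W t) with hFg
  have hFf' : ∀ t ∈ Ico 0 L, HasDerivWithinAt Ff (G c W t (Ff t)) (Ici t) t := by
    intro t ht
    have h1 : HasDerivAt Ff (deriv f t, deriv (deriv f) t) t :=
      ((hfd t).hasDerivAt).prodMk ((hdfd t).hasDerivAt)
    have h2 : G c W t (Ff t) = (deriv f t, deriv (deriv f) t) := by
      simp only [G, hFf]
      rw [heq t ⟨ht.1, ht.2.le⟩]
    rw [h2]
    exact h1.hasDerivWithinAt
  have hFg' : ∀ t ∈ Ico 0 L, HasDerivWithinAt Fg (G c W t (Fg t)) (Ici t) t := by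
    intro t _
    have h1 : HasDerivAt Fg (d₀ * efd c W t, d₀ * ((W t - c) * efn c W t)) t :=
      (((efn_hasDerivAt hW hM c t).const_mul d₀).prodMk
        ((efd_hasDerivAt hW hM c t).const_mul d₀))
    have h2 : G c W t (Fg t) = (d₀ * efd c W t, d₀ * ((W t - c) * efn c W t)) := by
      simp only [G, hFg]
      rw [Prod.mk.injEq]
      constructor
      · rfl
      · ring
    rw [h2]
    exact h1.hasDerivWithinAt
  have hcontf : ContinuousOn Ff (Icc 0 L) := by
    apply Continuous.continuousOn
    exact (hfd.continuous).prodMk (hdfd.continuous)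
  have hcontg : ContinuousOn Fg (Icc 0 L) := by
    apply Continuous.continuousOn
    have h1 := (efn_differentiable hW hM c).continuous
    have h2 := (efd_differentiable hW hM c).continuous
    fun_prop
  have hinit : Ff 0 = Fg 0 := by
    simp only [hFf, hFg]
    rw [hf0, efn_zero hW hM c, efd, rho_zero hW hM c, theta_zero hW hM c]
    simp
    rfl
  have := ODE_solution_unique_of_mem_Icc_right (v := G c W) (s := fun _ => univ)
    (fun t _ => (lipG hW hM c t).lipschitzOnWith) hcontf hFf' (fun _ _ => mem_univ _)
    hcontg hFg' (fun _ _ => mem_univ _) hinit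
  intro x hx
  have hxx := this hx
  simp only [hFf, hFg, Prod.mk.injEq] at hxx
  exact hxx

lemma exists_theta_in_Ioo {L c : ℝ} (hL : 0 < L) :
    ∃ x ∈ Icc 0 L, 0 < theta c W x ∧ theta c W x < π := by
  have hct : ContinuousAt (theta c W) 0 := (theta_continuous hW hM c).continuousAt
  rw [Metric.continuousAt_iff] at hct
  obtain ⟨δ, hδ0, hδ⟩ := hct π Real.pi_pos
  set u : ℝ := min δ L / 2 with hu
  have hu0 : 0 < u := by positivity
  have huL : u ≤ L := by
    have h1 : u ≤ L / 2 := by simp only [hu]; linarith [min_le_right δ L]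
    linarith
  have husmall : dist u 0 < δ := by
    rw [Real.dist_eq, sub_zero, abs_of_pos hu0]
    have : u ≤ δ / 2 := by simp only [hu]; linarith [min_le_left δ L]
    linarith
  have hθu := hδ husmall
  rw [Real.dist_eq, theta_zero hW hM c, sub_zero] at hθu
  exact ⟨u, ⟨hu0.le, huL⟩, theta_pos hW hM c hu0,
    lt_of_le_of_lt (le_abs_self _) hθu⟩

/-- From an eigenfunction, `theta c W L` is a positive multiple of `π`. -/
lemma eigen_to_theta {L c : ℝ} (hL : 0 < L) {f : ℝ → ℝ} (hf2 : ContDiff ℝ 2 f)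
    (heq : ∀ x ∈ Icc 0 L, deriv (deriv f) x = (W x - c) * f x)
    (hf0 : f 0 = 0) (hfL : f L = 0) (hne : ∃ x ∈ Icc 0 L, f x ≠ 0) :
    (∃ m : ℕ, 1 ≤ m ∧ theta c W L = m * π) ∧ deriv f 0 ≠ 0 ∧
      ∀ x ∈ Icc 0 L, f x = deriv f 0 * efn c W x := by
  have hsol := sol_eq hW hM hL.le hf2 heq hf0
  have hd0 : deriv f 0 ≠ 0 := by
    intro h0
    obtain ⟨x, hx, hfx⟩ := hne
    have := (hsol x hx).1
    rw [h0, zero_mul] at this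
    exact hfx this
  have hefnL : efn c W L = 0 := by
    have := (hsol L ⟨hL.le, le_refl L⟩).1
    rw [hfL] at this
    rcases mul_eq_zero.1 this.symm with h | h
    · exact absurd h hd0
    · exact h
  have hsinL : Real.sin (theta c W L) = 0 := (efn_eq_zero_iff hW hM c L).1 hefnL
  obtain ⟨j, hj⟩ := Real.sin_eq_zero_iff.1 hsinL
  have hθpos : 0 < theta c W L := theta_pos hW hM c hL
  have hj0 : 0 < j := by
    by_contra h
    push_neg at h
    have : (j : ℝ) * π ≤ 0 := mul_nonpos_of_nonpos_of_nonneg (by exact_mod_cast h) pi_pos.le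
    linarith [hj ▸ hθpos]
  refine ⟨⟨j.toNat, by omega, ?_⟩, hd0, fun x hx => (hsol x hx).1⟩
  rw [← hj]
  congr 1
  have h' : (j.toNat : ℤ) = j := Int.toNat_of_nonneg hj0.le
  exact_mod_cast h'.symm

/-- Conversely, if `theta c W L = m π` with `m ≥ 1` then `efn c W` is an eigenfunction. -/
lemma theta_to_eigen {L c : ℝ} (hL : 0 < L) {m : ℕ} (hm : 1 ≤ m)
    (hΘ : theta c W L = (m : ℝ) * π) :
    ContDiff ℝ 2 (efn c W) ∧
    (∀ x ∈ Icc 0 L, deriv (deriv (efn c W)) x = (W x - c) * efn c W x) ∧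
    efn c W 0 = 0 ∧ efn c W L = 0 ∧ ∃ x ∈ Icc 0 L, efn c W x ≠ 0 := by
  refine ⟨efn_contDiff hW hM c, ?_, efn_zero hW hM c, ?_, ?_⟩
  · intro x _
    rw [deriv_efn hW hM c, deriv_efd hW hM c]
  · rw [efn, hΘ]
    have : Real.sin ((m : ℝ) * π) = 0 := by
      have := Real.sin_int_mul_pi (m : ℤ)
      push_cast at this
      exact this
    rw [this, mul_zero]
  · obtain ⟨x, hx, h1, h2⟩ := exists_theta_in_Ioo hW hM (c := c) hL
    refine ⟨x, hx, ?_⟩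
    rw [efn]
    have hs := Real.sin_pos_of_pos_of_lt_pi h1 h2
    positivity

end ThetaFacts
end SturmAux

/-- Sturm oscillation theorem: if `lam n` (for `n ≥ 1`) enumerates in increasing
order all the eigenvalues of `-f'' + V f = λ f` on `[0, L]` with Dirichlet boundary
conditions, then an eigenfunction of the `n`-th eigenvalue has exactly `n - 1` zeros
in the open interval `(0, L)`. -/
theorem stmt_17 (L : ℝ) (hL : 0 < L) (V : ℝ → ℝ) (hV : ContinuousOn V (Icc 0 L))
    (lam : ℕ → ℝ)
    (hmono : ∀ m n : ℕ, 1 ≤ m → m < n → lam m < lam n)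
    (hev : ∀ n : ℕ, 1 ≤ n → ∃ f, DirichletEigenfunction L V (lam n) f)
    (hall : ∀ μ : ℝ, (∃ f, DirichletEigenfunction L V μ f) →
      ∃ n : ℕ, 1 ≤ n ∧ lam n = μ)
    (n : ℕ) (hn : 1 ≤ n) (f : ℝ → ℝ)
    (hf : DirichletEigenfunction L V (lam n) f) :
    {x ∈ Ioo 0 L | f x = 0}.ncard = n - 1 := by
  classical
  open SturmAux SturmAux.ThetaFacts Real in
  -- the clamped potential
  set W : ℝ → ℝ := fun t => V (max 0 (min L t)) with hWdef
  have hmemIcc : ∀ t : ℝ, max 0 (min L t) ∈ Icc 0 L := by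
    intro t
    exact ⟨le_max_left _ _, max_le hL.le (min_le_left L t)⟩
  have hW : Continuous W := by
    apply hV.comp_continuous (by fun_prop) hmemIcc
  have hWV : ∀ x ∈ Icc 0 L, W x = V x := by
    intro x hx
    have h1 : min L x = x := min_eq_right hx.2
    have h2 : max 0 x = x := max_eq_right hx.1
    simp only [hWdef, h1, h2]
  obtain ⟨C, hC⟩ := IsCompact.exists_bound_of_continuousOn isCompact_Icc hV
  set M : ℝ := max C 0 with hM'
  have hM : ∀ t, |W t| ≤ M := by
    intro t
    have := hC _ (hmemIcc t)
    rw [Real.norm_eq_abs] at this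
    exact le_trans this (le_max_left _ _)
  -- translation between eigenfunction notions
  have htrans : ∀ μ (g : ℝ → ℝ), DirichletEigenfunction L V μ g →
      ∀ x ∈ Icc 0 L, deriv (deriv g) x = (W x - μ) * g x := by
    rintro μ g ⟨-, hgeq, -, -, -⟩ x hx
    have := hgeq x hx
    rw [hWV x hx]
    linarith [this]
  -- from eigenvalue to theta
  have hTh : ∀ μ : ℝ, (∃ g, DirichletEigenfunction L V μ g) →
      ∃ m : ℕ, 1 ≤ m ∧ theta μ W L = m * π := by
    rintro μ ⟨g, hg⟩
    obtain ⟨hg2, hgeq, hg0, hgL, hgne⟩ := hg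
    exact (eigen_to_theta hW hM hL hg2 (htrans μ g ⟨hg2, hgeq, hg0, hgL, hgne⟩) hg0 hgL hgne).1
  -- from theta to eigenvalue
  have hEig : ∀ (μ : ℝ) (m : ℕ), 1 ≤ m → theta μ W L = m * π →
      ∃ g, DirichletEigenfunction L V μ g := by
    intro μ m hm hΘ
    obtain ⟨h2, heq, h0, hLz, hne⟩ := theta_to_eigen hW hM hL hm hΘ
    refine ⟨efn μ W, h2, ?_, h0, hLz, hne⟩
    intro x hx
    rw [heq x hx, hWV x hx]
    ring
  have hcontΘ : Continuous (fun c => theta c W L) := thetaL_cont hW hM L hL.le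
  -- main induction : theta (lam j) W L = j * π
  have key : ∀ j : ℕ, 1 ≤ j → theta (lam j) W L = j * π := by
    intro j hj'
    induction j, hj' using Nat.le_induction with
    | base =>
      obtain ⟨m, hm1, hmΘ⟩ := hTh (lam 1) (hev 1 le_rfl)
      rcases eq_or_lt_of_le hm1 with h1 | h1
      · rw [hmΘ, ← h1]
      · exfalso
        set c₀ : ℝ := min (lam 1) (-M - 2) with hc₀
        have hc₀le : c₀ ≤ lam 1 := min_le_left _ _
        have hΘc₀ : theta c₀ W L < π :=
          theta_low hW hM (min_le_right _ _) hL.le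
        have hmem : π ∈ Icc (theta c₀ W L) (theta (lam 1) W L) := by
          constructor
          · exact hΘc₀.le
          · rw [hmΘ]
            have : (1:ℝ) ≤ m := by exact_mod_cast hm1
            nlinarith [Real.pi_pos]
        obtain ⟨c, hc, hcπ⟩ := intermediate_value_Icc hc₀le hcontΘ.continuousOn hmem
        obtain ⟨i, hi1, hie⟩ := hall c (hEig c 1 le_rfl
          (by push_cast; rw [one_mul]; exact hcπ))
        have hΘi : theta (lam i) W L = π := by rw [hie]; exact hcπ
        have hlt : lam i < lam 1 := by
          by_contra hge
          push_neg at hge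
          have := theta_mono hW hM hge hL.le
          rw [hΘi, hmΘ] at this
          have h2m : (2:ℝ) ≤ m := by exact_mod_cast h1
          nlinarith [Real.pi_pos]
        rcases eq_or_lt_of_le hi1 with h | h
        · rw [← h] at hlt; exact lt_irrefl _ hlt
        · exact absurd (hmono 1 i le_rfl h) (not_lt.2 hlt.le)
    | succ j hj IH =>
      obtain ⟨m, hm1, hmΘ⟩ := hTh (lam (j + 1)) (hev (j + 1) (by omega))
      have hstrict : theta (lam j) W L < theta (lam (j + 1)) W L :=
        theta_strict hW hM (hmono j (j + 1) hj (by omega)) hL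
      have hIH := IH
      have hjm : j < m := by
        rw [hIH, hmΘ] at hstrict
        have : (j:ℝ) < m := by nlinarith [Real.pi_pos]
        exact_mod_cast this
      rcases eq_or_lt_of_le (show j + 1 ≤ m by omega) with h1 | h1
      · rw [hmΘ, ← h1]
      · exfalso
        have hmem : ((j:ℝ) + 1) * π ∈ Icc (theta (lam j) W L) (theta (lam (j+1)) W L) := by
          rw [hIH, hmΘ]
          constructor
          · nlinarith [Real.pi_pos]
          · have : ((j:ℝ) + 1) ≤ m := by exact_mod_cast (by omega : j + 1 ≤ m)
            nlinarith [Real.pi_pos]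
        obtain ⟨c, hc, hcπ⟩ := intermediate_value_Icc
          (hmono j (j+1) hj (by omega)).le hcontΘ.continuousOn hmem
        obtain ⟨i, hi1, hie⟩ := hall c (hEig c (j+1) (by omega)
          (by push_cast; exact hcπ))
        have hΘi : theta (lam i) W L = ((j:ℝ) + 1) * π := by rw [hie]; exact hcπ
        have hgt : lam j < lam i := by
          by_contra hge
          push_neg at hge
          have := theta_mono hW hM hge hL.le
          rw [hΘi, hIH] at this
          nlinarith [Real.pi_pos]
        have hlt : lam i < lam (j + 1) := by
          by_contra hge
          push_neg at hge
          have := theta_mono hW hM hge hL.le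
          rw [hΘi, hmΘ] at this
          have hm2 : ((j:ℝ) + 2) ≤ m := by exact_mod_cast (by omega : j + 2 ≤ m)
          nlinarith [Real.pi_pos]
        have hij : j < i := by
          by_contra hge
          push_neg at hge
          rcases eq_or_lt_of_le hge with h | h
          · rw [h] at hgt; exact lt_irrefl _ hgt
          · exact absurd (hmono i j hi1 h) (not_lt.2 hgt.le)
        have : j + 1 ≤ i := hij
        rcases eq_or_lt_of_le this with h | h
        · rw [← h] at hlt; exact lt_irrefl _ hlt
        · exact absurd (hmono (j+1) i (by omega) h) (not_lt.2 hlt.le)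
  -- conclude
  have hΘn : theta (lam n) W L = n * π := key n hn
  obtain ⟨hf2, hfeq, hf0, hfL, hfne⟩ := hf
  obtain ⟨-, hd0, hrep⟩ := eigen_to_theta hW hM hL hf2
    (htrans (lam n) f ⟨hf2, hfeq, hf0, hfL, hfne⟩) hf0 hfL hfne
  have hset : {x ∈ Ioo 0 L | f x = 0}
      = {x ∈ Ioo 0 L | Real.sin (theta (lam n) W x) = 0} := by
    ext x
    simp only [mem_sep_iff]
    constructor
    · rintro ⟨hx, hfx⟩
      refine ⟨hx, ?_⟩
      have := hrep x (Ioo_subset_Icc_self hx)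
      rw [hfx] at this
      rcases mul_eq_zero.1 this.symm with h | h
      · exact absurd h hd0
      · exact (efn_eq_zero_iff hW hM (lam n) x).1 h
    · rintro ⟨hx, hsx⟩
      refine ⟨hx, ?_⟩
      rw [hrep x (Ioo_subset_Icc_self hx), (efn_eq_zero_iff hW hM (lam n) x).2 hsx,
        mul_zero]
  rw [hset]
  exact count_zeros hW hM (lam n) hL n hn hΘn
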